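/- For any even positive integer r and any u ∈ {+1, -1}, the polynomial x^r - u·x^{r-1}·y - u·x·y^{r-1} + y^r is a sum of squares of polynomials in the variables x and y. -/

import Mathlib

open MvPolynomial

/-- A square is a sum of squares. -/
lemma my_isSumSq_sq {R : Type*} [AddMonoid R] [Mul R] (a : R) : IsSumSq (a * a) := by
  simpa using IsSumSq.sq_add a 0 IsSumSq.zero

/-- A square times a sum of squares is a sum of squares. -/
lemma my_isSumSq_sq_mul {R : Type*} [CommSemiring R] (a : R) {p : R} (hp : IsSumSq p) :
    IsSumSq (a * a * p) := by
  induction hp with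
  | zero => simpa using IsSumSq.zero
  | @sq_add b S pS ih =>
      have : a * a * (b * b + S) = (a * b) * (a * b) + a * a * S := by ring
      rw [this]
      exact IsSumSq.sq_add _ ih

noncomputable def myS (s : ℝ) : ℕ → MvPolynomial (Fin 2) ℝ
  | 0 => 1
  | k + 1 => (X 0) ^ 2 * myS s k + C s * X 0 * (X 1) ^ (2 * k + 1) + (X 1) ^ (2 * k + 2)

lemma myS_mul (s : ℝ) (hs : (C s : MvPolynomial (Fin 2) ℝ) ^ 2 = 1) (k : ℕ) :
    myS s k * (X 0 - C s * X 1)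
      = (X 0 : MvPolynomial (Fin 2) ℝ) ^ (2 * k + 1) - C s * (X 1) ^ (2 * k + 1) := by
  induction k with
  | zero => simp [myS]
  | succ k ih =>
      show ((X 0) ^ 2 * myS s k + C s * X 0 * (X 1) ^ (2 * k + 1) + (X 1) ^ (2 * k + 2))
            * (X 0 - C s * X 1) = _
      have h2 : 2 * (k + 1) + 1 = 2 * k + 3 := by ring
      rw [h2]
      linear_combination (X 0 : MvPolynomial (Fin 2) ℝ) ^ 2 * ih
        - X 0 * (X 1) ^ (2 * k + 2) * hs

noncomputable def myc : ℝ := Real.sqrt (1 / 2)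

lemma myc_half : (C myc : MvPolynomial (Fin 2) ℝ) ^ 2 + (C myc) ^ 2 = 1 := by
  rw [← map_pow, ← map_add, myc, Real.sq_sqrt (by norm_num : (0:ℝ) ≤ 1 / 2)]
  norm_num

lemma myT_isSumSq (s : ℝ) (hs : (C s : MvPolynomial (Fin 2) ℝ) ^ 2 = 1) (k : ℕ) :
    IsSumSq (myS s k - (C myc) ^ 2 * (X 1) ^ (2 * k)) := by
  induction k with
  | zero =>
      have key : myS s 0 - (C myc) ^ 2 * (X 1 : MvPolynomial (Fin 2) ℝ) ^ (2 * 0)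
          = (C myc) * (C myc) := by
        show (1 : MvPolynomial (Fin 2) ℝ) - (C myc) ^ 2 * (X 1) ^ (2 * 0) = _
        linear_combination -myc_half
      rw [key]; exact my_isSumSq_sq _
  | succ k ih =>
      have key : myS s (k + 1) - (C myc) ^ 2 * (X 1) ^ (2 * (k + 1))
          = X 0 * X 0 * (myS s k - (C myc) ^ 2 * (X 1) ^ (2 * k))
            + (C myc * ((X 0 + C s * X 1) * (X 1) ^ k))
              * (C myc * ((X 0 + C s * X 1) * (X 1) ^ k)) := by
        show (X 0) ^ 2 * myS s k + C s * X 0 * (X 1) ^ (2 * k + 1) + (X 1) ^ (2 * k + 2)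
              - (C myc) ^ 2 * (X 1) ^ (2 * (k + 1)) = _
        have h2 : 2 * (k + 1) = 2 * k + 2 := by ring
        rw [h2]
        linear_combination -(C s * X 0 * (X 1) ^ (2 * k + 1) + (X 1) ^ (2 * k + 2)) * myc_half
          - ((C myc) ^ 2 * (X 1) ^ (2 * k + 2)) * hs
      rw [key]
      exact (my_isSumSq_sq_mul (X 0) ih).add (my_isSumSq_sq _)

lemma myS_isSumSq (s : ℝ) (hs : (C s : MvPolynomial (Fin 2) ℝ) ^ 2 = 1) (k : ℕ) :
    IsSumSq (myS s k) := by
  have key : myS s k = (myS s k - (C myc) ^ 2 * (X 1) ^ (2 * k))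
      + (C myc * (X 1) ^ k) * (C myc * (X 1) ^ k) := by
    ring
  rw [key]
  exact (myT_isSumSq s hs k).add (my_isSumSq_sq _)

theorem stmt_0 (r : ℕ) (hr : Even r) (hr0 : 0 < r) (u : ℝ) (hu : u = 1 ∨ u = -1) :
    IsSumSq ((X 0) ^ r - C u * (X 0) ^ (r - 1) * X 1 - C u * X 0 * (X 1) ^ (r - 1)
      + (X 1) ^ r : MvPolynomial (Fin 2) ℝ) := by
  obtain ⟨m, rfl⟩ := hr
  match m, hr0 with
  | k + 1, _ =>
  have hs : (C u : MvPolynomial (Fin 2) ℝ) ^ 2 = 1 := by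
    rw [← map_pow]
    rcases hu with h | h <;> rw [h] <;> norm_num
  have h1 : k + 1 + (k + 1) = 2 * k + 2 := by ring
  have h2 : k + 1 + (k + 1) - 1 = 2 * k + 1 := by omega
  rw [h2, h1]
  have key : ((X 0) ^ (2 * k + 2) - C u * (X 0) ^ (2 * k + 1) * X 1
        - C u * X 0 * (X 1) ^ (2 * k + 1) + (X 1) ^ (2 * k + 2) : MvPolynomial (Fin 2) ℝ)
      = (X 0 - C u * X 1) * (X 0 - C u * X 1) * myS u k := by
    have hm := myS_mul u hs k
    linear_combination -(X 0 - C u * X 1) * hm - (X 1 : MvPolynomial (Fin 2) ℝ) ^ (2 * k + 2) * hs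
  rw [key]
  exact my_isSumSq_sq_mul _ (myS_isSumSq u hs k)
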